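/- If a simplicial complex Γ is d-collapsible, then its d-closure Δ_d(Γ) is d-collapsible. -/

import Mathlib

namespace ChordalPaper

/-- A simplicial complex on vertex set `Fin n`: a family of finsets closed under subsets. -/
def IsComplex {n : ℕ} (Γ : Set (Finset (Fin n))) : Prop :=
  ∀ F ∈ Γ, ∀ F' ⊆ F, F' ∈ Γ

/-- The `d`-closure `Δ_d(Γ)`: all subsets of size `≤ d`, together with all subsets
all of whose `(d+1)`-element subsets are faces of `Γ`. -/
def dClosure {n : ℕ} (d : ℕ) (Γ : Set (Finset (Fin n))) : Set (Finset (Fin n)) :=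
  {F | F.card ≤ d ∨ ∀ G ⊆ F, G.card = d + 1 → G ∈ Γ}

/-- The pure `(d-1)`-skeleton `⟨[n]⟩^{[d-1]}` of the full simplex: all subsets of size `≤ d`. -/
def fullSkel (n d : ℕ) : Set (Finset (Fin n)) := {F | F.card ≤ d}

/-- A facet: a maximal face. -/
def IsFacet {n : ℕ} (Γ : Set (Finset (Fin n))) (F : Finset (Fin n)) : Prop :=
  F ∈ Γ ∧ ∀ G ∈ Γ, F ⊆ G → G = F

/-- A free face: a face contained in a unique facet. -/
def IsFreeFace {n : ℕ} (Γ : Set (Finset (Fin n))) (E : Finset (Fin n)) : Prop :=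
  E ∈ Γ ∧ ∃! F, IsFacet Γ F ∧ E ⊆ F

/-- Collapse at `E`: remove all faces containing `E` (including `E` itself). -/
def collapseFace {n : ℕ} (Γ : Set (Finset (Fin n))) (E : Finset (Fin n)) :
    Set (Finset (Fin n)) := {F ∈ Γ | ¬ E ⊆ F}

/-- Successive collapses along a list of faces. -/
def collapseList {n : ℕ} (Γ : Set (Finset (Fin n))) :
    List (Finset (Fin n)) → Set (Finset (Fin n))
  | [] => Γ
  | E :: L => collapseList (collapseFace Γ E) L

/-- A free sequence: each face is free in the complex obtained by collapsing the previous ones. -/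
def IsFreeSeq {n : ℕ} (Γ : Set (Finset (Fin n))) : List (Finset (Fin n)) → Prop
  | [] => True
  | E :: L => IsFreeFace Γ E ∧ IsFreeSeq (collapseFace Γ E) L

/-- `d`-collapsibility: a sequence of elementary `d`-collapsings (at free faces of
dimension `< d`, i.e. cardinality `≤ d`) reduces `Γ` to the void complex. -/
def Collapsible {n : ℕ} (d : ℕ) (Γ : Set (Finset (Fin n))) : Prop :=
  ∃ L : List (Finset (Fin n)),
    IsFreeSeq Γ L ∧ (∀ E ∈ L, E.card ≤ d) ∧ collapseList Γ L = ∅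

/-- Simplicial deletion `Γ∖E`: remove all faces strictly containing `E` (keeping `E`). -/
def srDel {n : ℕ} (Γ : Set (Finset (Fin n))) (E : Finset (Fin n)) :
    Set (Finset (Fin n)) := {F ∈ Γ | ¬ E ⊂ F}

/-- Successive simplicial deletions along a list of faces. -/
def srDelList {n : ℕ} (Γ : Set (Finset (Fin n))) :
    List (Finset (Fin n)) → Set (Finset (Fin n))
  | [] => Γ
  | E :: L => srDelList (srDel Γ E) L

/-- A simplicial order for a `d`-closure on `Fin n`: a sequence of non-facet free faces of
cardinality `d` whose successive simplicial deletions reduce the complex to the pure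
`(d-1)`-skeleton of the full simplex. -/
def IsSimpOrder {n : ℕ} (d : ℕ) (Γ : Set (Finset (Fin n))) :
    List (Finset (Fin n)) → Prop
  | [] => Γ = fullSkel n d
  | E :: L => E.card = d ∧ IsFreeFace Γ E ∧ ¬ IsFacet Γ E ∧ IsSimpOrder d (srDel Γ E) L

/-- `Γ` is `d`-chordal: its `d`-closure equals the pure `(d-1)`-skeleton of the full
simplex or admits a simplicial order. -/
def DChordal {n : ℕ} (d : ℕ) (Γ : Set (Finset (Fin n))) : Prop :=
  ∃ L, IsSimpOrder d (dClosure d Γ) L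

/-- A minimal nonface of `Γ`. -/
def IsMinNonface {n : ℕ} (Γ : Set (Finset (Fin n))) (F : Finset (Fin n)) : Prop :=
  F ∉ Γ ∧ ∀ G ⊂ F, G ∈ Γ

end ChordalPaper

namespace Stmt8Aux
open ChordalPaper

variable {n d : ℕ}

theorem collapseList_append (C : Set (Finset (Fin n))) (K M : List (Finset (Fin n))) :
    collapseList C (K ++ M) = collapseList (collapseList C K) M := by
  induction K generalizing C with
  | nil => rfl
  | cons E K ih => simpa [collapseList] using ih (collapseFace C E)

theorem freeSeq_append {C : Set (Finset (Fin n))} {K M : List (Finset (Fin n))}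
    (h1 : IsFreeSeq C K) (h2 : IsFreeSeq (collapseList C K) M) : IsFreeSeq C (K ++ M) := by
  induction K generalizing C with
  | nil => exact h2
  | cons E K ih => exact ⟨h1.1, ih h1.2 h2⟩

theorem collapsible_of_seq {C : Set (Finset (Fin n))} {K : List (Finset (Fin n))}
    (h1 : IsFreeSeq C K) (h2 : ∀ E ∈ K, E.card ≤ d)
    (h3 : Collapsible d (collapseList C K)) : Collapsible d C := by
  obtain ⟨M, hM1, hM2, hM3⟩ := h3
  refine ⟨K ++ M, freeSeq_append h1 hM1, ?_, ?_⟩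
  · intro E hE
    rcases List.mem_append.mp hE with h | h
    · exact h2 E h
    · exact hM2 E h
  · rw [collapseList_append]; exact hM3

/-- Any complex (in fact any family) all of whose members have cardinality `≤ d`
is `d`-collapsible: repeatedly peel off a face of maximal cardinality. -/
theorem peel : ∀ (N : ℕ) (C : Set (Finset (Fin n))), C.ncard ≤ N →
    (∀ F ∈ C, F.card ≤ d) → Collapsible d C := by
  intro N
  induction N with
  | zero =>
    intro C hc _
    have : C = ∅ := (Set.ncard_eq_zero (Set.toFinite C)).mp (Nat.le_zero.mp hc)
    exact ⟨[], trivial, by simp, this⟩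
  | succ N ih =>
    intro C hc hsmall
    by_cases hne : C = ∅
    · exact ⟨[], trivial, by simp, hne⟩
    · obtain ⟨F, hF, hmax⟩ := Set.exists_max_image C Finset.card (Set.toFinite C)
        (Set.nonempty_iff_ne_empty.mpr hne)
      have hfacet : IsFacet C F :=
        ⟨hF, fun G hG hFG => (Finset.eq_of_subset_of_card_le hFG (hmax G hG)).symm⟩
      have hfree : IsFreeFace C F :=
        ⟨hF, F, ⟨hfacet, Finset.Subset.refl F⟩, fun W hW => hfacet.2 W hW.1.1 hW.2⟩
      have hsub : collapseFace C F ⊆ C \ {F} := by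
        intro G hG
        refine ⟨hG.1, fun hGF => hG.2 ?_⟩
        rw [Set.mem_singleton_iff] at hGF
        rw [hGF]
      have hlt : (collapseFace C F).ncard ≤ N := by
        have h1 : (collapseFace C F).ncard ≤ (C \ {F}).ncard :=
          Set.ncard_le_ncard hsub (Set.toFinite _)
        have h2 : (C \ {F}).ncard < C.ncard := Set.ncard_diff_singleton_lt_of_mem hF
        omega
      obtain ⟨K, hK1, hK2, hK3⟩ := ih (collapseFace C F) hlt
        (fun G hG => hsmall G hG.1)
      exact ⟨F :: K, ⟨hfree, hK1⟩, by
        intro E hE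
        rcases List.mem_cons.mp hE with h | h
        · rw [h]; exact hsmall F hF
        · exact hK2 E h, hK3⟩

/-- Every face is contained in a facet. -/
theorem subset_facet {Γ : Set (Finset (Fin n))} {F : Finset (Fin n)} (hF : F ∈ Γ) :
    ∃ τ, IsFacet Γ τ ∧ F ⊆ τ := by
  obtain ⟨τ, hτ, hmax⟩ := Set.exists_max_image {G ∈ Γ | F ⊆ G} Finset.card
    (Set.toFinite _) ⟨F, hF, Finset.Subset.refl F⟩
  refine ⟨τ, ⟨hτ.1, fun G hG hτG => ?_⟩, hτ.2⟩
  exact (Finset.eq_of_subset_of_card_le hτG (hmax G ⟨hG, hτ.2.trans hτG⟩)).symm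

/-- `D d Γ R`: the `d`-closure of `Γ` with the (closed) up-sets of all `d`-sets in `R`
removed. -/
def D (d : ℕ) (Γ R : Set (Finset (Fin n))) : Set (Finset (Fin n)) :=
  {F | (F.card ≤ d ∨ ∀ G ⊆ F, G.card = d + 1 → G ∈ Γ) ∧ ∀ S ⊆ F, S.card = d → S ∉ R}

/-- The `d`-sets in the interval `[E, τ]`. -/
def NewS (d : ℕ) (E τ : Finset (Fin n)) : Set (Finset (Fin n)) :=
  {S | S.card = d ∧ E ⊆ S ∧ S ⊆ τ}

theorem D_antitone {Γ R R' : Set (Finset (Fin n))} (h : R ⊆ R') :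
    D d Γ R' ⊆ D d Γ R :=
  fun F hF => ⟨hF.1, fun S hS hSc hSR => hF.2 S hS hSc (h hSR)⟩

theorem stage_base {Γ R : Set (Finset (Fin n))} {E τ : Finset (Fin n)}
    (hEd : E.card = d) (hEτ : E ⊆ τ)
    (H1 : ∀ F ∈ D d Γ R, d + 1 ≤ F.card → E ⊆ F → F ⊆ τ)
    (H2 : ∀ S ⊆ τ, S.card = d → S ∉ R)
    (H3 : ∀ G ⊆ τ, G.card = d + 1 → G ∈ Γ) :
    IsFreeFace (D d Γ R) E ∧ collapseFace (D d Γ R) E = D d Γ (R ∪ NewS d E τ) := by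
  have hup : ∀ F ∈ D d Γ R, E ⊆ F → F ⊆ τ := by
    intro F hF hEF
    by_cases h : F.card ≤ d
    · have : E = F := Finset.eq_of_subset_of_card_le hEF (by omega)
      rw [← this]; exact hEτ
    · exact H1 F hF (by omega) hEF
  have hmem : ∀ F, E ⊆ F → F ⊆ τ → F ∈ D d Γ R := by
    intro F hEF hFτ
    exact ⟨Or.inr fun G hG hGc => H3 G (hG.trans hFτ) hGc,
      fun S hS hSc => H2 S (hS.trans hFτ) hSc⟩
  have hτD : τ ∈ D d Γ R := hmem τ hEτ (Finset.Subset.refl τ)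
  have hED : E ∈ D d Γ R := hmem E (Finset.Subset.refl E) hEτ
  have hτfacet : IsFacet (D d Γ R) τ :=
    ⟨hτD, fun G hG hτG => Finset.Subset.antisymm (hup G hG (hEτ.trans hτG)) hτG⟩
  constructor
  · refine ⟨hED, τ, ⟨hτfacet, hEτ⟩, fun W hW => ?_⟩
    exact (hW.1.2 τ hτD (hup W hW.1.1 hW.2)).symm
  · ext F
    constructor
    · rintro ⟨⟨h1, h2⟩, hnE⟩
      refine ⟨h1, fun S hS hSc hSR => ?_⟩
      rcases hSR with h | h
      · exact h2 S hS hSc h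
      · exact hnE (h.2.1.trans hS)
    · rintro ⟨h1, h2⟩
      refine ⟨⟨h1, fun S hS hSc hSR => h2 S hS hSc (Or.inl hSR)⟩, fun hEF => ?_⟩
      exact h2 E hEF hEd (Or.inr ⟨hEd, Finset.Subset.refl E, hEτ⟩)

theorem stage (Γ : Set (Finset (Fin n))) :
    ∀ (m : ℕ) (E τ : Finset (Fin n)) (R : Set (Finset (Fin n))),
      (τ \ E).card ≤ m → E ⊆ τ → E.card ≤ d →
      (∀ F ∈ D d Γ R, d + 1 ≤ F.card → E ⊆ F → F ⊆ τ) →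
      (∀ S ⊆ τ, S.card = d → S ∉ R) →
      (∀ G ⊆ τ, G.card = d + 1 → G ∈ Γ) →
      ∃ K, IsFreeSeq (D d Γ R) K ∧ (∀ S ∈ K, S.card ≤ d) ∧
        collapseList (D d Γ R) K = D d Γ (R ∪ NewS d E τ) := by
  intro m
  induction m with
  | zero =>
    intro E τ R hm hEτ hEd H1 H2 H3
    by_cases hcard : E.card = d
    · obtain ⟨hfree, hcol⟩ := stage_base hcard hEτ H1 H2 H3
      exact ⟨[E], ⟨hfree, trivial⟩, by simp [hcard], hcol⟩
    · have hdiff : τ \ E = ∅ := Finset.card_eq_zero.mp (Nat.le_zero.mp hm)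
      have hτE : τ = E :=
        Finset.Subset.antisymm (Finset.sdiff_eq_empty_iff_subset.mp hdiff) hEτ
      have hnew : R ∪ NewS d E τ = R := by
        refine Set.union_eq_self_of_subset_right ?_
        rintro S ⟨hS1, hS2, hS3⟩
        rw [hτE] at hS3
        rw [Finset.Subset.antisymm hS3 hS2] at hS1
        omega
      exact ⟨[], trivial, by simp, by rw [hnew]; rfl⟩
  | succ m ih =>
    intro E τ R hm hEτ hEd H1 H2 H3
    by_cases hcard : E.card = d
    · obtain ⟨hfree, hcol⟩ := stage_base hcard hEτ H1 H2 H3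
      exact ⟨[E], ⟨hfree, trivial⟩, by simp [hcard], hcol⟩
    by_cases hdiff : τ \ E = ∅
    · have hτE : τ = E :=
        Finset.Subset.antisymm (Finset.sdiff_eq_empty_iff_subset.mp hdiff) hEτ
      have hnew : R ∪ NewS d E τ = R := by
        refine Set.union_eq_self_of_subset_right ?_
        rintro S ⟨hS1, hS2, hS3⟩
        rw [hτE] at hS3
        rw [Finset.Subset.antisymm hS3 hS2] at hS1
        omega
      exact ⟨[], trivial, by simp, by rw [hnew]; rfl⟩
    · obtain ⟨v, hv⟩ := Finset.nonempty_of_ne_empty hdiff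
      have hvτ : v ∈ τ := (Finset.mem_sdiff.mp hv).1
      have hvE : v ∉ E := (Finset.mem_sdiff.mp hv).2
      have hEcard : E.card < d := lt_of_le_of_ne hEd hcard
      -- first recursive call: `E ∪ {v}` inside `τ`
      have hc1 : (τ \ insert v E).card ≤ m := by
        have h1 : τ \ insert v E = (τ \ E).erase v := by
          ext x; simp [Finset.mem_sdiff, Finset.mem_erase, Finset.mem_insert]; tauto
        rw [h1, Finset.card_erase_of_mem hv]
        omega
      have hins : insert v E ⊆ τ := Finset.insert_subset hvτ hEτ
      have hinsc : (insert v E).card ≤ d := by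
        rw [Finset.card_insert_of_notMem hvE]; omega
      obtain ⟨K1, hK1seq, hK1card, hK1col⟩ := ih (insert v E) τ R hc1 hins hinsc
        (fun F hF hc hs => H1 F hF hc ((Finset.subset_insert v E).trans hs)) H2 H3
      set R1 := R ∪ NewS d (insert v E) τ with hR1
      -- second recursive call: `E` inside `τ.erase v`, with `R1`
      have hEτ' : E ⊆ τ.erase v := Finset.subset_erase.mpr ⟨hEτ, hvE⟩
      have hc2 : (τ.erase v \ E).card ≤ m := by
        have h1 : τ.erase v \ E = (τ \ E).erase v := by
          ext x; simp [Finset.mem_sdiff, Finset.mem_erase]; tauto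
        rw [h1, Finset.card_erase_of_mem hv]
        omega
      have H1' : ∀ F ∈ D d Γ R1, d + 1 ≤ F.card → E ⊆ F → F ⊆ τ.erase v := by
        intro F hF hc hEF
        have hFτ : F ⊆ τ := H1 F (D_antitone Set.subset_union_left hF) hc hEF
        refine Finset.subset_erase.mpr ⟨hFτ, fun hvF => ?_⟩
        have hins2 : insert v E ⊆ F := Finset.insert_subset hvF hEF
        obtain ⟨S, hS1, hS2, hS3⟩ := Finset.exists_subsuperset_card_eq (n := d) hins2
          (by rw [Finset.card_insert_of_notMem hvE]; omega) (by omega)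
        exact hF.2 S hS2 hS3 (Or.inr ⟨hS3, hS1, hS2.trans hFτ⟩)
      have H2' : ∀ S ⊆ τ.erase v, S.card = d → S ∉ R1 := by
        intro S hS hSc h
        rcases h with h | h
        · exact H2 S (hS.trans (Finset.erase_subset v τ)) hSc h
        · have hvS : v ∈ S := h.2.1 (Finset.mem_insert_self v E)
          exact (Finset.mem_erase.mp (hS hvS)).1 rfl
      have H3' : ∀ G ⊆ τ.erase v, G.card = d + 1 → G ∈ Γ :=
        fun G hG hGc => H3 G (hG.trans (Finset.erase_subset v τ)) hGc
      obtain ⟨K2, hK2seq, hK2card, hK2col⟩ := ih E (τ.erase v) R1 hc2 hEτ' hEd H1' H2' H3'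
      have hRfin : R1 ∪ NewS d E (τ.erase v) = R ∪ NewS d E τ := by
        ext S
        simp only [hR1, Set.mem_union, NewS, Set.mem_setOf_eq]
        constructor
        · rintro ((h | h) | h)
          · exact Or.inl h
          · exact Or.inr ⟨h.1, (Finset.subset_insert v E).trans h.2.1, h.2.2⟩
          · exact Or.inr ⟨h.1, h.2.1, h.2.2.trans (Finset.erase_subset v τ)⟩
        · rintro (h | h)
          · exact Or.inl (Or.inl h)
          · by_cases hvS : v ∈ S
            · exact Or.inl (Or.inr ⟨h.1, Finset.insert_subset hvS h.2.1, h.2.2⟩)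
            · exact Or.inr ⟨h.1, h.2.1, Finset.subset_erase.mpr ⟨h.2.2, hvS⟩⟩
      refine ⟨K1 ++ K2, freeSeq_append hK1seq (by rw [hK1col]; exact hK2seq), ?_, ?_⟩
      · intro S hS
        rcases List.mem_append.mp hS with h | h
        · exact hK1card S h
        · exact hK2card S h
      · rw [collapseList_append, hK1col, hK2col, hRfin]

theorem main : ∀ (L : List (Finset (Fin n))) (Γ R : Set (Finset (Fin n))),
    IsComplex Γ → IsFreeSeq Γ L → (∀ E ∈ L, E.card ≤ d) → collapseList Γ L = ∅ →
    (∀ S ∈ R, S ∉ Γ) → Collapsible d (D d Γ R) := by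
  intro L
  induction L with
  | nil =>
    intro Γ R _ _ _ hempty _
    have hΓ : Γ = ∅ := hempty
    refine peel (D d Γ R).ncard _ le_rfl ?_
    intro F hF
    rcases hF.1 with h | h
    · exact h
    · by_contra hlt
      push_neg at hlt
      obtain ⟨G, _, hG2, hG3⟩ := Finset.exists_subsuperset_card_eq
        (Finset.empty_subset F) (Nat.zero_le (d + 1)) (by omega)
      have := h G hG2 hG3
      rw [hΓ] at this
      exact this
  | cons E L ih =>
    intro Γ R hcplx hseq hcards hempty hinv
    obtain ⟨⟨hEΓ, τ, hτ, huniq⟩, hseq'⟩ := hseq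
    have hτΓ : τ ∈ Γ := hτ.1.1
    have hEτ : E ⊆ τ := hτ.2
    have hmax : ∀ G ∈ Γ, E ⊆ G → G ⊆ τ := by
      intro G hG hEG
      obtain ⟨W, hW, hGW⟩ := subset_facet hG
      have h := huniq W ⟨hW, hEG.trans hGW⟩
      rw [← h]; exact hGW
    have hEd : E.card ≤ d := hcards E List.mem_cons_self
    have H1 : ∀ F ∈ D d Γ R, d + 1 ≤ F.card → E ⊆ F → F ⊆ τ := by
      intro F hF hFc hEF x hxF
      obtain ⟨G, hG1, hG2, hG3⟩ := Finset.exists_subsuperset_card_eq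
        (Finset.insert_subset hxF hEF : insert x E ⊆ F)
        (le_trans (Finset.card_insert_le x E) (by omega)) hFc
      have hGΓ : G ∈ Γ := by
        rcases hF.1 with h | h
        · omega
        · exact h G hG2 hG3
      exact hmax G hGΓ ((Finset.subset_insert x E).trans hG1)
        (hG1 (Finset.mem_insert_self x E))
    have H2 : ∀ S ⊆ τ, S.card = d → S ∉ R :=
      fun S hS _ h => hinv S h (hcplx τ hτΓ S hS)
    have H3 : ∀ G ⊆ τ, G.card = d + 1 → G ∈ Γ :=
      fun G hG _ => hcplx τ hτΓ G hG
    obtain ⟨K, hKseq, hKcard, hKcol⟩ :=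
      stage Γ (τ \ E).card E τ R le_rfl hEτ hEd H1 H2 H3
    have hcplx' : IsComplex (collapseFace Γ E) := by
      intro F hF F' hsub
      exact ⟨hcplx F hF.1 F' hsub, fun hEF' => hF.2 (hEF'.trans hsub)⟩
    have hDeq : D d Γ (R ∪ NewS d E τ) = D d (collapseFace Γ E) (R ∪ NewS d E τ) := by
      ext F
      constructor
      · rintro ⟨h1, h2⟩
        refine ⟨?_, h2⟩
        rcases h1 with h | h
        · exact Or.inl h
        · refine Or.inr fun G hG hGc => ⟨h G hG hGc, fun hEG => ?_⟩
          have hFc : d + 1 ≤ F.card := by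
            have := Finset.card_le_card hG
            omega
          have hFD : F ∈ D d Γ R :=
            ⟨Or.inr h, fun S hS hSc hSR => h2 S hS hSc (Or.inl hSR)⟩
          have hFτ : F ⊆ τ := H1 F hFD hFc (hEG.trans hG)
          obtain ⟨S, hS1, hS2, hS3⟩ := Finset.exists_subsuperset_card_eq
            ((hEG.trans hG) : E ⊆ F) hEd (by omega)
          exact h2 S hS2 hS3 (Or.inr ⟨hS3, hS1, hS2.trans hFτ⟩)
      · rintro ⟨h1, h2⟩
        refine ⟨?_, h2⟩
        rcases h1 with h | h
        · exact Or.inl h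
        · exact Or.inr fun G hG hGc => (h G hG hGc).1
    have hinv' : ∀ S ∈ R ∪ NewS d E τ, S ∉ collapseFace Γ E := by
      rintro S (h | h) hSΓ'
      · exact hinv S h hSΓ'.1
      · exact hSΓ'.2 h.2.1
    have hcol' := ih (collapseFace Γ E) (R ∪ NewS d E τ) hcplx' hseq'
      (fun E' h => hcards E' (List.mem_cons_of_mem E h)) hempty hinv'
    rw [hDeq] at hKcol
    exact collapsible_of_seq hKseq hKcard (by rw [hKcol]; exact hcol')

end Stmt8Aux

open ChordalPaper in
/-- the `d`-closure of a `d`-collapsible complex is `d`-collapsible. -/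
theorem stmt8 (n d : ℕ) (hd : 1 ≤ d) (Γ : Set (Finset (Fin n))) (hΓ : IsComplex Γ)
    (hcol : Collapsible d Γ) :
    Collapsible d (dClosure d Γ) := by
  obtain ⟨L, h1, h2, h3⟩ := hcol
  have heq : dClosure d Γ = Stmt8Aux.D d Γ ∅ := by
    ext F
    simp [dClosure, Stmt8Aux.D]
  rw [heq]
  exact Stmt8Aux.main L Γ ∅ hΓ h1 h2 h3 (by simp)
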